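/- Let X = U_X Λ_X^{1/2} and Y = U_Y Λ_Y^{1/2} where U_X, U_Y ∈ ℝ^{n×d} have orthonormal columns and Λ_X, Λ_Y are diagonal positive definite, and suppose X I_{p,q} X^T = Y I_{p,q} Y^T. Then there exists a matrix W ∈ O_d ∩ O_{p,q} such that U_X Λ_X^{1/2} = U_Y Λ_Y^{1/2} W. -/

import Mathlib

open Matrix

/-- The signature matrix `I_{p,q} = diag(1,…,1,-1,…,-1)` with `p` ones and `q` minus ones. -/
noncomputable def Ipq (p q : ℕ) : Matrix (Fin (p + q)) (Fin (p + q)) ℝ :=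
  Matrix.diagonal (fun i => if (i : ℕ) < p then (1 : ℝ) else -1)

/-- If `U_X Λ_X^{1/2}` and `U_Y Λ_Y^{1/2}` (with `U_X, U_Y` having orthonormal columns and
`Λ_X, Λ_Y` diagonal positive definite) induce the same matrix `X I_{p,q} Xᵀ`, then they differ
by right multiplication by some `W ∈ O_d ∩ O_{p,q}`. -/
theorem exists_orthogonal_indefinite_aligning {n p q : ℕ}
    (UX UY : Matrix (Fin n) (Fin (p + q)) ℝ)
    (lX lY : Fin (p + q) → ℝ)
    (hUX : UXᵀ * UX = 1) (hUY : UYᵀ * UY = 1)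
    (hlX : ∀ i, 0 < lX i) (hlY : ∀ i, 0 < lY i)
    (h : (UX * Matrix.diagonal fun i => Real.sqrt (lX i)) * Ipq p q *
          (UX * Matrix.diagonal fun i => Real.sqrt (lX i))ᵀ =
        (UY * Matrix.diagonal fun i => Real.sqrt (lY i)) * Ipq p q *
          (UY * Matrix.diagonal fun i => Real.sqrt (lY i))ᵀ) :
    ∃ W : Matrix (Fin (p + q)) (Fin (p + q)) ℝ,
      W ∈ Matrix.orthogonalGroup (Fin (p + q)) ℝ ∧
      W * Ipq p q * Wᵀ = Ipq p q ∧
      UX * Matrix.diagonal (fun i => Real.sqrt (lX i)) =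
        UY * Matrix.diagonal (fun i => Real.sqrt (lY i)) * W := by
  classical
  set σ : Fin (p + q) → ℝ := fun i => if (i : ℕ) < p then (1 : ℝ) else -1 with hσ
  have hIpq : Ipq p q = Matrix.diagonal σ := rfl
  have hσval : ∀ i, σ i = 1 ∨ σ i = -1 := by
    intro i
    by_cases hi : (i : ℕ) < p
    · left; simp [hσ, hi]
    · right; simp [hσ, hi]
  set DX := Matrix.diagonal (fun i => Real.sqrt (lX i)) with hDX
  set DY := Matrix.diagonal (fun i => Real.sqrt (lY i)) with hDY
  set SX := Matrix.diagonal (fun i => σ i * lX i) with hSX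
  set SY := Matrix.diagonal (fun i => σ i * lY i) with hSY
  have hDXSX : DX * Ipq p q * DX = SX := by
    rw [hDX, hSX, hIpq, Matrix.diagonal_mul_diagonal, Matrix.diagonal_mul_diagonal]
    exact congrArg Matrix.diagonal (funext fun i => by
      rw [mul_comm (Real.sqrt (lX i)) (σ i), mul_assoc, Real.mul_self_sqrt (hlX i).le])
  have hDYSY : DY * Ipq p q * DY = SY := by
    rw [hDY, hSY, hIpq, Matrix.diagonal_mul_diagonal, Matrix.diagonal_mul_diagonal]
    exact congrArg Matrix.diagonal (funext fun i => by
      rw [mul_comm (Real.sqrt (lY i)) (σ i), mul_assoc, Real.mul_self_sqrt (hlY i).le])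
  have hDXT : DXᵀ = DX := by rw [hDX, Matrix.diagonal_transpose]
  have hDYT : DYᵀ = DY := by rw [hDY, Matrix.diagonal_transpose]
  have hSXT : SXᵀ = SX := by rw [hSX, Matrix.diagonal_transpose]
  have hSYT : SYᵀ = SY := by rw [hSY, Matrix.diagonal_transpose]
  have h' : UX * SX * UXᵀ = UY * SY * UYᵀ := by
    have e1 : UX * SX * UXᵀ = UX * DX * Ipq p q * (UX * DX)ᵀ := by
      rw [Matrix.transpose_mul, hDXT, ← hDXSX]
      simp only [Matrix.mul_assoc]
    have e2 : UY * SY * UYᵀ = UY * DY * Ipq p q * (UY * DY)ᵀ := by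
      rw [Matrix.transpose_mul, hDYT, ← hDYSY]
      simp only [Matrix.mul_assoc]
    rw [e1, e2, h]
  set A := UYᵀ * UX with hA
  -- key1 : SX * UXᵀ = Aᵀ * SY * UYᵀ
  have key1 : SX * UXᵀ = Aᵀ * SY * UYᵀ := by
    have k1 : UXᵀ * (UX * SX * UXᵀ) = UXᵀ * (UY * SY * UYᵀ) := by rw [h']
    simp only [← Matrix.mul_assoc] at k1
    rw [hUX, one_mul] at k1
    rw [hA, Matrix.transpose_mul, Matrix.transpose_transpose]
    exact k1
  -- key1' : UX * SX = UY * SY * A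
  have key1' : UX * SX = UY * SY * A := by
    have := congrArg Matrix.transpose key1
    simp only [Matrix.transpose_mul, Matrix.transpose_transpose, hSXT, hSYT] at this
    rw [this]
    simp only [Matrix.mul_assoc]
  -- key2 : A * SX * UXᵀ = SY * UYᵀ
  have key2 : A * SX * UXᵀ = SY * UYᵀ := by
    have k2 : UYᵀ * (UX * SX * UXᵀ) = UYᵀ * (UY * SY * UYᵀ) := by rw [h']
    simp only [← Matrix.mul_assoc] at k2
    rw [hUY, one_mul] at k2
    rw [Matrix.mul_assoc, ← Matrix.mul_assoc] at k2
    exact k2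
  -- hcomm : SY * A = A * SX
  have hcomm : SY * A = A * SX := by
    have k3 : A * SX * UXᵀ * UX = SY * UYᵀ * UX := by rw [key2]
    simp only [Matrix.mul_assoc] at k3
    rw [hUX, mul_one, ← hA] at k3
    exact k3.symm
  -- SX is invertible
  have hdet : IsUnit SX.det := by
    rw [hSX, Matrix.det_diagonal]
    apply IsUnit.mk0
    apply Finset.prod_ne_zero_iff.mpr
    intro i _
    apply mul_ne_zero
    · rcases hσval i with hi | hi <;> rw [hi] <;> norm_num
    · exact (hlX i).ne'
  -- hUXA : UX = UY * A
  have hUXA : UX = UY * A := by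
    have k4 : UX * SX = UY * A * SX := by
      rw [key1', Matrix.mul_assoc, hcomm, ← Matrix.mul_assoc]
    have k5 : UX * SX * SX⁻¹ = UY * A * SX * SX⁻¹ := by rw [k4]
    simp only [Matrix.mul_assoc, Matrix.mul_nonsing_inv _ hdet, mul_one] at k5
    simpa [Matrix.mul_assoc] using k5
  -- orthogonality of A
  have hAtA : Aᵀ * A = 1 := by
    have := hUX
    rw [hUXA, Matrix.transpose_mul] at this
    rwa [Matrix.mul_assoc, ← Matrix.mul_assoc UYᵀ, hUY, one_mul] at this
  have hAAt : A * Aᵀ = 1 := mul_eq_one_comm.mp hAtA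
  -- entrywise consequences of hcomm
  have hkey : ∀ i j, A i j ≠ 0 → σ i = σ j ∧ lY i = lX j := by
    intro i j hne
    have e : (SY * A) i j = (A * SX) i j := by rw [hcomm]
    rw [hSY, hSX, Matrix.diagonal_mul, Matrix.mul_diagonal] at e
    have h5 : σ i * lY i = σ j * lX j := mul_right_cancel₀ hne (by rw [e]; ring)
    have hpx := hlX j
    have hpy := hlY i
    rcases hσval i with hi | hi <;> rcases hσval j with hj | hj <;>
      rw [hi, hj] at h5
    · exact ⟨hi.trans hj.symm, by linarith⟩
    · exfalso; nlinarith
    · exfalso; nlinarith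
    · exact ⟨hi.trans hj.symm, by linarith⟩
  have hADX : A * DX = DY * A := by
    ext i j
    rw [hDX, hDY, Matrix.mul_diagonal, Matrix.diagonal_mul]
    by_cases hne : A i j = 0
    · rw [hne]; ring
    · rw [(hkey i j hne).2, mul_comm]
  have hAI : A * Ipq p q = Ipq p q * A := by
    ext i j
    rw [hIpq, Matrix.mul_diagonal, Matrix.diagonal_mul]
    by_cases hne : A i j = 0
    · rw [hne]; ring
    · rw [(hkey i j hne).1, mul_comm]
  have hstar : star A = Aᵀ := by
    ext i j
    simp [Matrix.star_apply]
  refine ⟨A, ?_, ?_, ?_⟩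
  · rw [Matrix.mem_orthogonalGroup_iff]
    exact hAAt
  · rw [hAI, Matrix.mul_assoc, hAAt, mul_one]
  · rw [Matrix.mul_assoc, ← hADX, ← Matrix.mul_assoc, ← hUXA]
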